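/- Let p be a probability mass function sorted nonincreasingly with p (K+1) > 0. Then PRO_{K+1} ≥ PRO_K: the PRO lower bound is monotone nondecreasing in K. -/
import Mathlib


/-- Monotonicity: the PRO lower bound is nondecreasing in K. -/
theorem PRO_mono (p : ℕ → ℝ) (K : ℕ)
    (hnn : ∀ i, 0 ≤ p i)
    (hs : Summable (fun i => p (i + 1)))
    (hsum : ∑' i, p (i + 1) = 1)
    (hsort : ∀ i j, 1 ≤ i → i ≤ j → p j ≤ p i)
    (hK : 1 ≤ K) (hpK1 : 0 < p (K + 1)) :
    -Real.log (p (K + 1)) -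
        ∑ i ∈ Finset.Icc 1 (K + 1), p i * Real.log (p i / p (K + 1)) ≥
      -Real.log (p K) - ∑ i ∈ Finset.Icc 1 K, p i * Real.log (p i / p K) := by
  have hpK : 0 < p K := lt_of_lt_of_le hpK1 (hsort K (K + 1) hK (Nat.le_succ K))
  have hpi : ∀ i ∈ Finset.Icc 1 K, 0 < p i := by
    intro i hi
    simp only [Finset.mem_Icc] at hi
    exact lt_of_lt_of_le hpK (hsort i K hi.1 hi.2)
  -- split off the top term
  have hsplit : ∑ i ∈ Finset.Icc 1 (K + 1), p i * Real.log (p i / p (K + 1)) =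
      ∑ i ∈ Finset.Icc 1 K, p i * Real.log (p i / p (K + 1)) := by
    rw [Finset.sum_Icc_succ_top (by omega : 1 ≤ K + 1)]
    rw [div_self (ne_of_gt hpK1), Real.log_one, mul_zero, add_zero]
  rw [hsplit]
  -- expand logs of quotients
  have hexp : ∀ c : ℝ, 0 < c →
      ∑ i ∈ Finset.Icc 1 K, p i * Real.log (p i / c) =
        (∑ i ∈ Finset.Icc 1 K, p i * Real.log (p i)) -
          (∑ i ∈ Finset.Icc 1 K, p i) * Real.log c := by
    intro c hc
    rw [Finset.sum_mul, ← Finset.sum_sub_distrib]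
    refine Finset.sum_congr rfl fun i hi => ?_
    rw [Real.log_div (ne_of_gt (hpi i hi)) (ne_of_gt hc), mul_sub]
  rw [hexp _ hpK1, hexp _ hpK]
  have hS : ∑ i ∈ Finset.Icc 1 K, p i ≤ 1 := by
    have h1 : ∑ i ∈ Finset.Icc 1 K, p i = ∑ i ∈ Finset.range K, p (i + 1) := by
      rw [← Finset.Ico_add_one_right_eq_Icc, Finset.sum_Ico_eq_sum_range]
      simp [add_comm]
    rw [h1, ← hsum]
    exact Summable.sum_le_tsum _ (fun i _ => hnn _) hs
  have hab : Real.log (p (K + 1)) ≤ Real.log (p K) :=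
    Real.log_le_log hpK1 (hsort K (K + 1) hK (Nat.le_succ K))
  nlinarith [mul_nonneg (sub_nonneg.2 hS) (sub_nonneg.2 hab)]
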